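/- Let h ∈ ℝ³ with h₁² + h₂² - h₃² < 0 and h₃ < 0, and suppose h₁² + h₂² - h₃² = -R² with R > 1 (i.e. h₃² - h₁² - h₂² > 1). Then for all u in the cone {u : u₁² + u₂² ≤ u₃², u₃ ≥ 0}, one has u₁h₁ + u₂h₂ + u₃h₃ + √(u₃² - u₁² - u₂²) ≤ 0, with equality iff u = 0. -/
import Mathlib


theorem normal_R_gt_one_max_zero (h1 h2 h3 R : ℝ)
    (hR : h1 ^ 2 + h2 ^ 2 - h3 ^ 2 = -R ^ 2) (hR1 : 1 < R) (hh3 : h3 < 0) :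
    ∀ u1 u2 u3 : ℝ, u1 ^ 2 + u2 ^ 2 ≤ u3 ^ 2 → 0 ≤ u3 →
      (u1 * h1 + u2 * h2 + u3 * h3 + Real.sqrt (u3 ^ 2 - u1 ^ 2 - u2 ^ 2) ≤ 0 ∧
       (u1 * h1 + u2 * h2 + u3 * h3 + Real.sqrt (u3 ^ 2 - u1 ^ 2 - u2 ^ 2) = 0 ↔
         (u1, u2, u3) = (0, 0, 0))) := by
  intro u1 u2 u3 hcone hu3
  have hq0 : 0 ≤ u3 ^ 2 - u1 ^ 2 - u2 ^ 2 := by linarith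
  set q := Real.sqrt (u3 ^ 2 - u1 ^ 2 - u2 ^ 2) with hqdef
  have hqnn : 0 ≤ q := Real.sqrt_nonneg _
  have hqsq : q ^ 2 = u3 ^ 2 - u1 ^ 2 - u2 ^ 2 := Real.sq_sqrt hq0
  have hcs2 : (u1 * h1 + u2 * h2 + q) ^ 2 ≤ u3 ^ 2 * (h1 ^ 2 + h2 ^ 2 + 1) := by
    nlinarith [sq_nonneg (u1 * h2 - u2 * h1), sq_nonneg (u1 - q * h1),
      sq_nonneg (u2 - q * h2)]
  have key : u1 * h1 + u2 * h2 + q ≤ -(u3 * h3) := by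
    rcases le_or_gt (u1 * h1 + u2 * h2 + q) 0 with hle | hpos
    · nlinarith [mul_nonneg hu3 (neg_nonneg.mpr hh3.le)]
    · have hcs : (u1 * h1 + u2 * h2 + q) ^ 2 ≤ u3 ^ 2 * h3 ^ 2 := by
        nlinarith [sq_nonneg u3, sq_nonneg (R - 1)]
      nlinarith [mul_nonneg hu3 (neg_nonneg.mpr hh3.le)]
  refine ⟨by linarith, ?_, ?_⟩
  · intro hE
    have hu3z : u3 = 0 := by
      by_contra hne
      have hu3pos : 0 < u3 := lt_of_le_of_ne hu3 (Ne.symm hne)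
      have heq : u1 * h1 + u2 * h2 + q = -(u3 * h3) := by linarith
      rw [heq] at hcs2
      have hRs : (0:ℝ) < R ^ 2 - 1 := by nlinarith
      nlinarith [mul_pos (mul_pos hu3pos hu3pos) hRs]
    have h1z : u1 = 0 := by nlinarith
    have h2z : u2 = 0 := by nlinarith
    simp [hu3z, h1z, h2z]
  · intro hu
    have e1 : u1 = 0 := by simpa using congrArg Prod.fst hu
    have e2 : u2 = 0 := by simpa using congrArg (fun p => p.2.1) hu
    have e3 : u3 = 0 := by simpa using congrArg (fun p => p.2.2) hu
    subst e1; subst e2; subst e3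
    simp [hqdef]
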